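/- Key Lemma: let v = (v_1,…,v_n) be a valuation profile, and suppose the payment rule is discriminatory price dominated, i.e., the utility satisfies u_i^{v_i}(b) ≥ v_i(x_i(b)) − Σ_{j=1}^{x_i(b)} b_i(j) for every profile b and bidder i. For a bidder i with x_i^v ≥ 1 let τ_i ∈ {1,…,x_i^v} be a minimizer of v_i(j)/j over j ∈ {1,…,x_i^v}. Then for every bidder i with x_i^v ≥ 1, every bid sub-profile b_{−i}, and every α > 0, there exists a probability distribution D over uniform bid vectors, each element of its support bidding a common value t·v_i(τ_i)/τ_i with t ∈ [0, 1 − e^{−1/α}] on the first x_i^v entries and 0 afterwards, such that E_{b'_i∼D}[u_i^{v_i}(b'_i, b_{−i})] ≥ α(1 − e^{−1/α})·x_i^v·(v_i(τ_i)/τ_i) − α·Σ_{j=1}^{x_i^v} β_j(b_{−i}). -/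

import Mathlib

open Finset MeasureTheory

noncomputable section

/-- A bid vector for an auction of `k` units: entry `j` is the `(j+1)`-st marginal bid. -/
abbrev Bid (k : ℕ) := Fin k → ℝ

/-- Standard bid vectors: non-increasing and non-negative. -/
def StdBid {k : ℕ} (b : Bid k) : Prop :=
  (∀ j j' : Fin k, j ≤ j' → b j' ≤ b j) ∧ ∀ j, 0 ≤ b j

/-- Uniform bid vectors: a common value `c ≥ 0` on the first `q ≤ k` entries, `0` afterwards. -/
def UnifBid {k : ℕ} (b : Bid k) : Prop :=
  ∃ c : ℝ, 0 ≤ c ∧ ∃ q : ℕ, q ≤ k ∧ ∀ j : Fin k, b j = if (j : ℕ) < q then c else 0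

/-- A valuation on `{0,…,k}`: zero at `0`, non-negative and non-decreasing (up to `k`). -/
def IsValuation (k : ℕ) (v : ℕ → ℝ) : Prop :=
  v 0 = 0 ∧ (∀ x, 0 ≤ v x) ∧ ∀ x y : ℕ, x ≤ y → y ≤ k → v x ≤ v y

/-- Submodularity: non-increasing marginal values `v j - v (j-1)`. -/
def SubmodularVal (k : ℕ) (v : ℕ → ℝ) : Prop :=
  ∀ x y : ℕ, 1 ≤ x → x < y → y ≤ k → v y - v (y - 1) ≤ v x - v (x - 1)

/-- Subadditivity. -/
def SubadditiveVal (k : ℕ) (v : ℕ → ℝ) : Prop :=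
  ∀ x y : ℕ, x + y ≤ k → v (x + y) ≤ v x + v y

/-- `x` is a valid allocation for the bidding profile `b`:
all `k` units are allocated, and every winning bid is at least every losing bid. -/
def ValidAlloc {n k : ℕ} (b : Fin n → Bid k) (x : Fin n → ℕ) : Prop :=
  (∑ i, x i) = k ∧
  ∀ i i' : Fin n, ∀ j j' : Fin k, (j : ℕ) < x i → x i' ≤ (j' : ℕ) → b i' j' ≤ b i j

/-- The sum of the first `x` entries of a bid vector. -/
def winSum {k : ℕ} (b : Bid k) (x : ℕ) : ℝ :=
  ∑ j : Fin k, if (j : ℕ) < x then b j else 0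

/-- No-overbidding of the bid vector `b` with respect to the valuation `v`. -/
def NoOverbid {k : ℕ} (v : ℕ → ℝ) (b : Bid k) : Prop :=
  ∀ s : ℕ, 1 ≤ s → s ≤ k → winSum b s ≤ v s

/-- The `j`-th highest element of a multiset of reals (`j` is 1-indexed; default `0`). -/
def kthHighest (s : Multiset ℝ) (j : ℕ) : ℝ :=
  ((s.sort (· ≤ ·)).reverse).getD (j - 1) 0

/-- The multiset of all bids submitted under the profile `b`. -/
def allBids {n k : ℕ} (b : Fin n → Bid k) : Multiset ℝ :=
  (Finset.univ : Finset (Fin n × Fin k)).val.map fun p => b p.1 p.2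

/-- The multiset of all bids submitted by the bidders other than `i`. -/
def othersBids {n k : ℕ} (b : Fin n → Bid k) (i : Fin n) : Multiset ℝ :=
  ((Finset.univ : Finset (Fin n × Fin k)).filter (fun p => p.1 ≠ i)).val.map
    fun p => b p.1 p.2

/-- `β_j` (1-indexed): the `j`-th lowest among the `k` highest elements of `s`,
i.e. the `(k+1-j)`-th highest element of `s`. -/
def betaBid (k : ℕ) (s : Multiset ℝ) (j : ℕ) : ℝ := kthHighest s (k + 1 - j)

/-- `∑_{j=1}^{x} β_j(s)`. -/
def betaSum (k : ℕ) (s : Multiset ℝ) (x : ℕ) : ℝ := ∑ j ∈ Finset.Icc 1 x, betaBid k s j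

/-- The uniform price: the `(k+1)`-st highest of all submitted bids (`0` by default). -/
def price {n k : ℕ} (b : Fin n → Bid k) : ℝ := kthHighest (allBids b) (k + 1)

/-- Discriminatory-pricing utility of bidder `i` under the allocation rule `X`. -/
def uDisc {n k : ℕ} (X : (Fin n → Bid k) → Fin n → ℕ) (v : ℕ → ℝ) (i : Fin n)
    (b : Fin n → Bid k) : ℝ :=
  v (X b i) - winSum (b i) (X b i)

/-- Uniform-pricing utility of bidder `i` under the allocation rule `X`. -/
def uUnif {n k : ℕ} (X : (Fin n → Bid k) → Fin n → ℕ) (v : ℕ → ℝ) (i : Fin n)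
    (b : Fin n → Bid k) : ℝ :=
  v (X b i) - (X b i : ℝ) * price b

/-- The `x`-th entry (1-indexed) of a bid vector, with the convention that it is `0`
for `x = 0` (or `x > k`). -/
def lastWinBid {k : ℕ} (b : Bid k) (x : ℕ) : ℝ :=
  if h : 1 ≤ x ∧ x ≤ k then b ⟨x - 1, by omega⟩ else 0

/-- Social welfare of the allocation `x` under the valuation profile `v`. -/
def SW {n : ℕ} (v : Fin n → ℕ → ℝ) (x : Fin n → ℕ) : ℝ := ∑ i, v i (x i)

lemma pairwise_ge_getElem {l : List ℝ} (hp : l.Pairwise (fun a b => b ≤ a)) {i j : ℕ}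
    (hij : i ≤ j) (hj : j < l.length) : l[j] ≤ l[i]'(by omega) := by
  rcases eq_or_lt_of_le hij with rfl | hlt
  · exact le_refl _
  · exact List.pairwise_iff_getElem.mp hp i j (by omega) hj hlt

lemma kthHighest_nonneg {s : Multiset ℝ} (hs : ∀ x ∈ s, 0 ≤ x) (r : ℕ) :
    0 ≤ kthHighest s r := by
  unfold kthHighest
  set l := (s.sort (· ≤ ·)).reverse with hl
  rcases lt_or_ge (r - 1) l.length with h | h
  · rw [List.getD_eq_getElem l 0 h]
    have hmem : l[r-1] ∈ l := List.getElem_mem _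
    exact hs _ (Multiset.mem_sort (· ≤ ·) |>.mp (List.mem_reverse.mp hmem))
  · rw [List.getD_eq_default l 0 h]

lemma kthHighest_sorted (s : Multiset ℝ) :
    ((s.sort (· ≤ ·)).reverse).Pairwise (fun a b => b ≤ a) := by
  rw [List.pairwise_reverse]
  exact Multiset.pairwise_sort s _

lemma kthHighest_anti {s : Multiset ℝ} (hs : ∀ x ∈ s, 0 ≤ x) {r r' : ℕ}
    (hr : 1 ≤ r) (h : r ≤ r') : kthHighest s r' ≤ kthHighest s r := by
  have h0 := kthHighest_nonneg hs r
  unfold kthHighest at *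
  set l := (s.sort (· ≤ ·)).reverse with hl
  rcases lt_or_ge (r' - 1) l.length with h' | h'
  · have hr1 : r - 1 < l.length := lt_of_le_of_lt (by omega) h'
    rw [List.getD_eq_getElem l 0 h', List.getD_eq_getElem l 0 hr1]
    exact pairwise_ge_getElem (kthHighest_sorted s) (by omega) h'
  · rw [List.getD_eq_default l 0 h']
    exact h0

lemma kthHighest_count {s : Multiset ℝ} {c : ℝ} {r : ℕ} (hr : 1 ≤ r)
    (hcount : r ≤ Multiset.card (s.filter (fun x => c ≤ x))) : c ≤ kthHighest s r := by
  classical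
  unfold kthHighest
  set l := (s.sort (· ≤ ·)).reverse with hl
  have hcard : Multiset.card (s.filter (fun x => c ≤ x))
      = (l.filter (fun x => decide (c ≤ x))).length := by
    rw [hl, List.filter_reverse, List.length_reverse]
    conv_lhs => rw [← Multiset.sort_eq s (· ≤ ·)]
    rw [Multiset.filter_coe]
    rfl
  have hlength : Multiset.card s = l.length := by
    rw [hl, List.length_reverse, Multiset.length_sort]
  have hlen : r - 1 < l.length := by
    have h1 : Multiset.card (s.filter (fun x => c ≤ x)) ≤ Multiset.card s :=
      Multiset.card_le_card (Multiset.filter_le _ s)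
    omega
  rw [List.getD_eq_getElem l 0 hlen]
  by_contra hlt
  push_neg at hlt
  have hdrop : ∀ x ∈ l.drop (r-1), ¬ (c ≤ x) := by
    intro x hx
    obtain ⟨j, hj, rfl⟩ := List.mem_iff_getElem.mp hx
    rw [List.length_drop] at hj
    have hg : (Multiset.sort s (fun x1 x2 => x1 ≤ x2)).reverse.length = l.length := rfl
    rw [List.getElem_drop]
    have hle : l[r-1+j]'(by omega) ≤ l[r-1] :=
      pairwise_ge_getElem (kthHighest_sorted s) (by omega) (by omega)
    exact not_le.mpr (lt_of_le_of_lt hle hlt)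
  have hsplit : (l.filter (fun x => decide (c ≤ x))).length ≤ r - 1 := by
    conv_lhs => rw [← List.take_append_drop (r-1) l, List.filter_append]
    rw [List.length_append]
    have h1 : (l.drop (r-1)).filter (fun x => decide (c ≤ x)) = [] := by
      rw [List.filter_eq_nil_iff]
      intro x hx
      simpa using hdrop x hx
    rw [h1]
    simp only [List.length_nil, add_zero]
    calc ((l.take (r-1)).filter _).length ≤ (l.take (r-1)).length :=
          List.length_filter_le _ _
      _ ≤ r - 1 := by rw [List.length_take]; omega
  omega

lemma sum_if_lt (k q : ℕ) (c : ℝ) :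
    (∑ j : Fin k, if (j : ℕ) < q then c else 0) = (min q k) * c := by
  rw [Fin.sum_univ_eq_sum_range (fun j => if j < q then c else 0) k,
    ← Finset.sum_filter]
  have : (Finset.range k).filter (fun j => j < q) = Finset.range (min q k) := by
    ext x; simp [Finset.mem_filter, Finset.mem_range]; omega
  rw [this, Finset.sum_const, Finset.card_range, nsmul_eq_mul]

/-- **Key Lemma.** For any discriminatory-price-dominated multi-unit
auction, any bidder `i` winning `xᵢ^v ≥ 1` units in the optimum, any bid profile
`b₋ᵢ` of the other bidders and any `α > 0`, there is a randomized uniform deviation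
(bidding `t · vᵢ(τᵢ)/τᵢ` with `t ∈ [0, 1 - e^{-1/α}]` on the first `xᵢ^v` entries)
whose expected utility is at least
`α(1 - e^{-1/α}) xᵢ^v vᵢ(τᵢ)/τᵢ - α ∑_{j=1}^{xᵢ^v} β_j(b₋ᵢ)`. -/
theorem stmt8 (n k : ℕ) (hk : 1 ≤ k)
    -- the allocation rule
    (X : (Fin n → Bid k) → Fin n → ℕ)
    (hX : ∀ b, ValidAlloc b (X b))
    -- the valuation profile
    (v : Fin n → ℕ → ℝ) (hv : ∀ i, IsValuation k (v i))
    -- a welfare-optimal allocation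
    (xopt : Fin n → ℕ) (hxoptk : (∑ i, xopt i) = k)
    (hxoptmax : ∀ y : Fin n → ℕ, (∑ i, y i) = k → SW v y ≤ SW v xopt)
    -- an abstract utility, dominated by the discriminatory-pricing utility
    (u : Fin n → (Fin n → Bid k) → ℝ)
    (hdom : ∀ i b, v i (X b i) - winSum (b i) (X b i) ≤ u i b)
    -- a bidder winning at least one unit in the optimum
    (i : Fin n) (hi : 1 ≤ xopt i)
    -- `τᵢ` minimizes `vᵢ(j)/j` over `j ∈ {1,…,xᵢ^v}`
    (τ : ℕ) (hτmem : τ ∈ Finset.Icc 1 (xopt i))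
    (hτmin : ∀ j ∈ Finset.Icc 1 (xopt i), v i τ / (τ : ℝ) ≤ v i j / (j : ℝ))
    -- the bids of the other bidders
    (b : Fin n → Bid k) (hb : ∀ j, j ≠ i → StdBid (b j))
    (α : ℝ) (hα : 0 < α) :
    ∃ D : Measure (Bid k), IsProbabilityMeasure D ∧
      (∀ᵐ b' ∂D, ∃ t : ℝ, 0 ≤ t ∧ t ≤ 1 - Real.exp (-(1 / α)) ∧
        b' = fun j : Fin k => if (j : ℕ) < xopt i then t * (v i τ / (τ : ℝ)) else 0) ∧
      α * (1 - Real.exp (-(1 / α))) * (xopt i : ℝ) * (v i τ / (τ : ℝ))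
          - α * betaSum k (othersBids b i) (xopt i)
        ≤ ∫ b', u i (Function.update b i b') ∂D := by
  classical
  obtain ⟨hv0, hvnn, hvmono⟩ := hv i
  set m := xopt i with hm
  set w := v i τ / (τ : ℝ) with hwdef
  set T := 1 - Real.exp (-(1 / α)) with hT
  set s := othersBids b i with hs
  obtain ⟨hτ1, hτm⟩ := Finset.mem_Icc.mp hτmem
  have hm1 : 1 ≤ m := hi
  have hmk : m ≤ k := by
    rw [hm, ← hxoptk]
    exact Finset.single_le_sum (fun _ _ => Nat.zero_le _) (Finset.mem_univ i)
  have hw0 : 0 ≤ w := div_nonneg (hvnn τ) (Nat.cast_nonneg τ)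
  have hjw : ∀ j : ℕ, 1 ≤ j → j ≤ m → (j : ℝ) * w ≤ v i j := by
    intro j h1 h2
    have hle := hτmin j (Finset.mem_Icc.mpr ⟨h1, h2⟩)
    have hj0 : (0:ℝ) < (j : ℝ) := by exact_mod_cast h1
    calc (j : ℝ) * w ≤ (j : ℝ) * (v i j / j) :=
          mul_le_mul_of_nonneg_left hle (Nat.cast_nonneg j)
      _ = v i j := by field_simp
  have hsnn : ∀ x ∈ s, 0 ≤ x := by
    intro x hx
    rw [hs] at hx
    unfold othersBids at hx
    obtain ⟨p, hp, rfl⟩ := Multiset.mem_map.mp hx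
    have hp1 : p.1 ≠ i := (Finset.mem_filter.mp (Finset.mem_def.mpr hp)).2
    exact (hb p.1 hp1).2 p.2
  have hexp1 : Real.exp (-(1 / α)) < 1 := Real.exp_lt_one_iff.mpr (neg_lt_zero.mpr (by positivity))
  have hexp0 : 0 < Real.exp (-(1 / α)) := Real.exp_pos _
  have hT0 : 0 < T := by rw [hT]; linarith
  have hT1 : T < 1 := by rw [hT]; linarith
  have hβnn : ∀ j : ℕ, 0 ≤ betaBid k s j := fun j => kthHighest_nonneg hsnn _
  have hβsumnn : 0 ≤ betaSum k s m := Finset.sum_nonneg fun j _ => hβnn j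
  -- the uniform deviation
  set dev : ℝ → Bid k := fun t j => if (j : ℕ) < m then t * w else 0 with hdev
  set N : ℝ → ℕ := fun t => ((Finset.Icc 1 m).filter (fun j => betaBid k s j < t * w)).card
    with hN
  have hNm : ∀ t, N t ≤ m := by
    intro t
    calc N t ≤ (Finset.Icc 1 m).card := Finset.card_filter_le _ _
      _ = m := by rw [Nat.card_Icc]; omega
  -- key pointwise utility bound
  have hkey : ∀ t : ℝ, 0 ≤ t → t ≤ 1 →
      (N t : ℝ) * (w * (1 - t)) ≤ u i (Function.update b i (dev t)) := by
    intro t ht0 ht1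
    set b' := Function.update b i (dev t) with hb'
    have hb'i : b' i = dev t := Function.update_self i (dev t) b
    have hb'j : ∀ j, j ≠ i → b' j = b j := fun j hj => Function.update_of_ne hj _ _
    obtain ⟨hsum', hval⟩ := hX b'
    set xt := X b' i with hxt
    have hxtk : xt ≤ k := by
      rw [hxt, ← hsum']
      exact Finset.single_le_sum (fun _ _ => Nat.zero_le _) (Finset.mem_univ i)
    -- the winning sum of the deviation
    have hws : winSum (b' i) xt = ((min xt m : ℕ) : ℝ) * (t * w) := by
      rw [hb'i]
      unfold winSum
      have hcongr : ∀ j : Fin k,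
          (if (j : ℕ) < xt then dev t j else 0)
          = (if (j : ℕ) < min xt m then t * w else 0) := by
        intro j
        rw [hdev]
        by_cases h1 : (j : ℕ) < xt <;> by_cases h2 : (j : ℕ) < m <;>
          simp [h1, h2, lt_min_iff]
      rw [Finset.sum_congr rfl fun j _ => hcongr j, sum_if_lt]
      congr 2
      omega
    -- allocation bound: xt ≥ N t
    have hNxt : N t ≤ xt := by
      by_contra hcon
      push_neg at hcon
      set N0 := N t with hN0
      have hN01 : 1 ≤ N0 := by omega
      have hN0m : N0 ≤ m := hNm t
      have hex : ∃ j0 ∈ (Finset.Icc 1 m).filter (fun j => betaBid k s j < t * w),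
          N0 ≤ j0 := by
        by_contra hne
        push_neg at hne
        have hsub : (Finset.Icc 1 m).filter (fun j => betaBid k s j < t * w)
            ⊆ Finset.Icc 1 (N0 - 1) := by
          intro j hj
          have h1 := (Finset.mem_Icc.mp (Finset.mem_filter.mp hj).1).1
          have h2 := hne j hj
          exact Finset.mem_Icc.mpr ⟨h1, by omega⟩
        have hcard := Finset.card_le_card hsub
        rw [Nat.card_Icc] at hcard
        have hNeq : N0 = ((Finset.Icc 1 m).filter
            (fun j => betaBid k s j < t * w)).card := rfl
        omega
      obtain ⟨j0, hj0f, hj0ge⟩ := hex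
      obtain ⟨hj0mem, hj0lt⟩ := Finset.mem_filter.mp hj0f
      have hj0m := (Finset.mem_Icc.mp hj0mem).2
      have hbN0 : betaBid k s N0 < t * w := by
        have hmono : betaBid k s N0 ≤ betaBid k s j0 := by
          unfold betaBid
          exact kthHighest_anti hsnn (by omega) (by omega)
        exact lt_of_le_of_lt hmono hj0lt
      have hxtltk : xt < k := by omega
      have hlosing : ∀ i' : Fin n, i' ≠ i → ∀ j : Fin k, (j : ℕ) < X b' i' →
          t * w ≤ b i' j := by
        intro i' hi' j hj
        have h1 : b' i ⟨xt, hxtltk⟩ ≤ b' i' j := hval i' i j ⟨xt, hxtltk⟩ hj (le_refl _)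
        rw [hb'i, hdev] at h1
        simp only at h1
        rw [if_pos (show xt < m by omega)] at h1
        rwa [hb'j i' hi'] at h1
      -- count the winning bids of the others
      have hcount : (k + 1 - N0 : ℕ) ≤ Multiset.card (s.filter (fun x => t * w ≤ x)) := by
        rw [hs]
        unfold othersBids
        rw [Multiset.filter_map, Multiset.card_map, ← Finset.filter_val, ← Finset.card_def]
        have hW : (Finset.filter (fun p : Fin n × Fin k => p.1 ≠ i ∧ (p.2 : ℕ) < X b' p.1)
            Finset.univ).card = k - xt := by
          rw [Finset.card_filter, Fintype.sum_prod_type]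
          have hrow : ∀ a : Fin n, (∑ j : Fin k,
              if a ≠ i ∧ (j : ℕ) < X b' a then 1 else 0) =
              if a = i then 0 else X b' a := by
            intro a
            by_cases ha : a = i
            · simp [ha]
            · rw [if_neg ha]
              have hXak : X b' a ≤ k := by
                rw [← hsum']
                exact Finset.single_le_sum (fun _ _ => Nat.zero_le _) (Finset.mem_univ a)
              calc (∑ j : Fin k, if a ≠ i ∧ (j : ℕ) < X b' a then 1 else 0)
                  = ∑ j : Fin k, if (j : ℕ) < X b' a then 1 else 0 := by
                    refine Finset.sum_congr rfl fun j _ => ?_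
                    simp [ha]
                _ = ((Finset.range k).filter (fun j => j < X b' a)).card := by
                    rw [Finset.card_filter,
                      Fin.sum_univ_eq_sum_range (fun j => if j < X b' a then 1 else 0) k]
                _ = X b' a := by
                    have hfeq : (Finset.range k).filter (fun j => j < X b' a)
                        = Finset.range (X b' a) := by
                      ext x
                      simp only [Finset.mem_filter, Finset.mem_range]
                      omega
                    rw [hfeq, Finset.card_range]
          rw [Finset.sum_congr rfl fun a _ => hrow a]
          have htot := Finset.sum_erase_add Finset.univ (fun a => X b' a) (Finset.mem_univ i)
          rw [hsum'] at htot
          beta_reduce at htot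
          rw [← hxt] at htot
          have hsplit : (∑ a : Fin n, if a = i then 0 else X b' a)
              = ∑ a ∈ Finset.univ.erase i, X b' a := by
            rw [← Finset.sum_erase_add Finset.univ _ (Finset.mem_univ i), if_pos rfl,
              add_zero]
            refine Finset.sum_congr rfl fun a ha => ?_
            rw [if_neg (Finset.ne_of_mem_erase ha)]
          rw [hsplit]
          omega
        have hsub2 : Finset.filter (fun p : Fin n × Fin k => p.1 ≠ i ∧ (p.2 : ℕ) < X b' p.1)
            Finset.univ
            ⊆ Finset.filter ((fun x => t * w ≤ x) ∘ fun p : Fin n × Fin k => b p.1 p.2)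
                (Finset.filter (fun p : Fin n × Fin k => p.1 ≠ i) Finset.univ) := by
          intro p hp
          obtain ⟨-, hp1, hp2⟩ := Finset.mem_filter.mp hp
          refine Finset.mem_filter.mpr ⟨Finset.mem_filter.mpr ⟨Finset.mem_univ _, hp1⟩, ?_⟩
          exact hlosing p.1 hp1 p.2 hp2
        have hcards := Finset.card_le_card hsub2
        rw [hW] at hcards
        omega
      have hcontra := kthHighest_count (c := t * w) (r := k + 1 - N0)
        (by omega) hcount
      have hbeq : betaBid k s N0 = kthHighest s (k + 1 - N0) := rfl
      linarith
    -- conclude the pointwise bound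
    have hvlb : ((min xt m : ℕ) : ℝ) * w ≤ v i xt := by
      rcases le_or_gt xt m with h | h
      · rw [min_eq_left h]
        rcases Nat.eq_zero_or_pos xt with h0 | h0
        · simp [h0, hv0]
        · exact hjw xt h0 h
      · rw [min_eq_right h.le]
        calc (m : ℝ) * w ≤ v i m := hjw m hm1 le_rfl
          _ ≤ v i xt := hvmono m xt h.le hxtk
    have hub := hdom i b'
    rw [← hxt] at hub
    have hNle : (N t : ℝ) ≤ ((min xt m : ℕ) : ℝ) := by
      have hle : N t ≤ min xt m := le_min hNxt (hNm t)
      exact_mod_cast hle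
    have hfactor : (0:ℝ) ≤ w * (1 - t) := mul_nonneg hw0 (by linarith)
    calc (N t : ℝ) * (w * (1 - t)) ≤ ((min xt m : ℕ) : ℝ) * (w * (1 - t)) :=
          mul_le_mul_of_nonneg_right hNle hfactor
      _ = ((min xt m : ℕ) : ℝ) * w - ((min xt m : ℕ) : ℝ) * (t * w) := by ring
      _ ≤ v i xt - winSum (b' i) xt := by rw [hws]; linarith
      _ ≤ u i b' := hub
  -- existence of a good deterministic deviation
  set R := α * T * (m : ℝ) * w - α * betaSum k s m with hR
  have hex : ∃ t : ℝ, 0 ≤ t ∧ t ≤ T ∧ R ≤ u i (Function.update b i (dev t)) := by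
    rcases le_or_gt R 0 with hR0 | hR0
    · refine ⟨0, le_refl 0, hT0.le, ?_⟩
      have h := hkey 0 le_rfl (by linarith)
      have h2 : (0:ℝ) ≤ (N 0 : ℝ) * (w * (1 - 0)) := by positivity
      linarith
    · have hw : 0 < w := by
        rcases eq_or_lt_of_le hw0 with heq | h
        · exfalso
          rw [hR] at hR0
          rw [← heq] at hR0
          nlinarith
        · exact h
      by_contra hne
      push_neg at hne
      -- integrability of the indicator functions
      have hind : ∀ (c a₂ b₂ : ℝ), IntervalIntegrable
          (fun t => if c < t then (1:ℝ) else 0) volume a₂ b₂ := by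
        intro c a₂ b₂
        have heq : (fun t : ℝ => if c < t then (1:ℝ) else 0)
            = Set.indicator (Set.Ioi c) (fun _ => 1) := by
          funext t
          simp [Set.indicator_apply, Set.mem_Ioi]
        rw [heq, intervalIntegrable_iff]
        exact ((integrableOn_const_iff (C := (1:ℝ))).mpr (Or.inr measure_Ioc_lt_top)).indicator
          measurableSet_Ioi
      have hNfInt : IntervalIntegrable
          (fun t => ∑ j ∈ Finset.Icc 1 m, (if betaBid k s j / w < t then (1:ℝ) else 0))
          volume 0 T := by
        have h1 := IntervalIntegrable.sum (μ := volume) (a := 0) (b := T) (Finset.Icc 1 m)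
          (f := fun j t => if betaBid k s j / w < t then (1:ℝ) else 0)
          (fun j _ => hind _ 0 T)
        have heq : (∑ j ∈ Finset.Icc 1 m,
            fun t : ℝ => if betaBid k s j / w < t then (1:ℝ) else 0)
            = fun t => ∑ j ∈ Finset.Icc 1 m, (if betaBid k s j / w < t then (1:ℝ) else 0) := by
          funext t
          simp [Finset.sum_apply]
        rwa [heq] at h1
      have hhInt : IntervalIntegrable (fun t : ℝ => R / w * (1 - t)⁻¹) volume 0 T := by
        apply ContinuousOn.intervalIntegrable
        apply ContinuousOn.mul continuousOn_const
        apply ContinuousOn.inv₀ (continuousOn_const.sub continuousOn_id)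
        intro x hx
        rw [Set.uIcc_of_le hT0.le] at hx
        have hx1 : x < 1 := lt_of_le_of_lt hx.2 hT1
        exact sub_ne_zero_of_ne hx1.ne'
      -- the basic integral computations
      have hTe : (1:ℝ) - T = Real.exp (-(1 / α)) := by rw [hT]; ring
      have hInt1 : ∫ t in (0:ℝ)..T, (1 - t)⁻¹ = 1 / α := by
        have h1 := intervalIntegral.integral_comp_sub_left (a := 0) (b := T)
          (fun x : ℝ => x⁻¹) 1
        rw [h1, integral_inv]
        · rw [sub_zero, hTe, one_div, ← Real.exp_neg, Real.log_exp, neg_neg]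
        · rw [Set.uIcc_of_le (by linarith)]
          intro hmem
          have h2 := (Set.mem_Icc.mp hmem).1
          rw [hTe] at h2
          linarith
      have hIndInt : ∀ c : ℝ, 0 ≤ c →
          T - c ≤ ∫ t in (0:ℝ)..T, (if c < t then (1:ℝ) else 0) := by
        intro c hc
        rcases le_or_gt T c with h | h
        · have h0 : (0:ℝ) ≤ ∫ t in (0:ℝ)..T, (if c < t then (1:ℝ) else 0) := by
            apply intervalIntegral.integral_nonneg hT0.le
            intro x _
            split <;> norm_num
          linarith
        · have hadj := intervalIntegral.integral_add_adjacent_intervals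
            (a := (0:ℝ)) (b := c) (c := T) (μ := volume) (hind c 0 c) (hind c c T)
          have h1 : ∫ t in (0:ℝ)..c, (if c < t then (1:ℝ) else 0) = 0 := by
            rw [intervalIntegral.integral_congr (g := fun _ => (0:ℝ)),
              intervalIntegral.integral_zero]
            intro x hx
            rw [Set.uIcc_of_le hc] at hx
            simp only
            rw [if_neg (not_lt.mpr hx.2)]
          have h2 : ∫ t in c..T, (if c < t then (1:ℝ) else 0) = T - c := by
            rw [intervalIntegral.integral_congr_ae (g := fun _ => (1:ℝ)) ?_]
            · rw [intervalIntegral.integral_const, smul_eq_mul, mul_one]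
            · filter_upwards with x hx
              rw [Set.uIoc_of_le h.le] at hx
              rw [if_pos hx.1]
          rw [h1, h2, zero_add] at hadj
          rw [← hadj]
      -- lower bound on the integral of N
      have hNfLower : (m : ℝ) * T - betaSum k s m / w
          ≤ ∫ t in (0:ℝ)..T, ∑ j ∈ Finset.Icc 1 m,
            (if betaBid k s j / w < t then (1:ℝ) else 0) := by
        rw [intervalIntegral.integral_finset_sum (fun j _ => hind _ 0 T)]
        have hcard2 : (Finset.Icc 1 m).card = m := by rw [Nat.card_Icc]; omega
        have hlhs : (m : ℝ) * T - betaSum k s m / w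
            = ∑ j ∈ Finset.Icc 1 m, (T - betaBid k s j / w) := by
          rw [Finset.sum_sub_distrib, Finset.sum_const, hcard2, nsmul_eq_mul,
            ← Finset.sum_div]
          unfold betaSum
          rfl
        rw [hlhs]
        exact Finset.sum_le_sum fun j _ => hIndInt _ (div_nonneg (hβnn j) hw0)
      -- strict upper bound on the integral of N
      have hNf : ∀ t : ℝ, (N t : ℝ)
          = ∑ j ∈ Finset.Icc 1 m, (if betaBid k s j / w < t then (1:ℝ) else 0) := by
        intro t
        rw [hN]
        simp only
        rw [Finset.card_filter]
        push_cast
        refine Finset.sum_congr rfl fun j _ => ?_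
        simp only [div_lt_iff₀ hw]
      have hb2 : ∀ x ∈ Set.Ioo (0:ℝ) T, 0 < R / w * (1 - x)⁻¹
          - ∑ j ∈ Finset.Icc 1 m, (if betaBid k s j / w < x then (1:ℝ) else 0) := by
        intro x hx
        have hx1 : x < 1 := lt_trans hx.2 hT1
        have hkx := hkey x hx.1.le hx1.le
        have hux := hne x hx.1.le hx.2.le
        have hNlt : (N x : ℝ) * (w * (1 - x)) < R := lt_of_le_of_lt hkx hux
        have hpos1 : 0 < w * (1 - x) := mul_pos hw (by linarith)
        have hNlt2 : (N x : ℝ) < R / (w * (1 - x)) := (lt_div_iff₀ hpos1).mpr hNlt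
        have heq2 : R / w * (1 - x)⁻¹ = R / (w * (1 - x)) := by
          rw [eq_comm, ← div_div, div_eq_mul_inv]
        rw [heq2, ← hNf x]
        linarith
      have hposInt := intervalIntegral.intervalIntegral_pos_of_pos_on
        (hhInt.sub hNfInt) hb2 hT0
      rw [intervalIntegral.integral_sub hhInt hNfInt] at hposInt
      have hIH : ∫ t in (0:ℝ)..T, R / w * (1 - t)⁻¹ = R / w * (1 / α) := by
        rw [intervalIntegral.integral_const_mul, hInt1]
      rw [hIH] at hposInt
      have hfin : (m : ℝ) * T - betaSum k s m / w < R / w * (1 / α) := by linarith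
      have hαw : 0 < α * w := mul_pos hα hw
      have h3 : α * w * ((m : ℝ) * T - betaSum k s m / w)
          = α * T * (m : ℝ) * w - α * betaSum k s m := by
        field_simp
      have h4 : α * w * (R / w * (1 / α)) = R := by
        field_simp
      have hfin2 := mul_lt_mul_of_pos_left hfin hαw
      rw [h3, h4, ← hR] at hfin2
      exact lt_irrefl R hfin2
  obtain ⟨t, ht0, htT, hu⟩ := hex
  refine ⟨Measure.dirac (dev t), inferInstance, ?_, ?_⟩
  · rw [ae_dirac_eq]
    exact Filter.eventually_pure.mpr ⟨t, ht0, htT, rfl⟩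
  · rw [integral_dirac]
    exact hu

end
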